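/- Let (Ω, Σ, μ) be a σ-finite measure space and let f ∈ L¹(μ) with ‖f‖₁ = 1. If the support of f contains an atom A for μ, then f is not a Δ-point: there exists ε > 0 such that f ∉ cl conv{g ∈ B_{L¹(μ)} : ‖f − g‖₁ ≥ 2 − ε}. Concretely, if f = c a.e. on A with c > 0, then any ε with 0 < ε < 2c·μ(A) works, and any convex combination h of elements of Δ_ε(f) satisfies ‖f − h‖₁ ≥ (c − ε/(2μ(A)))·μ(A) > 0. -/

import Mathlib

open MeasureTheory

/-- `A` is an atom for the measure `μ`. -/
def IsMeasureAtom {Ω : Type*} [MeasurableSpace Ω] (μ : Measure Ω) (A : Set Ω) : Prop :=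
  MeasurableSet A ∧ 0 < μ A ∧ μ A < ⊤ ∧
    ∀ B : Set Ω, MeasurableSet B → B ⊆ A → μ B = 0 ∨ μ B = μ A

private lemma abs_sub_eq_aux (c g : ℝ) (hc : 0 ≤ c) :
    |c - g| = c + |g| - 2 * max (min c g) 0 := by
  rcases le_total g 0 with h | h
  · rw [min_eq_right (h.trans hc), max_eq_right h, abs_of_nonpos h,
      abs_of_nonneg (by linarith)]
    ring
  · rw [abs_of_nonneg h]
    rcases le_total c g with h2 | h2
    · rw [min_eq_left h2, max_eq_left hc, abs_of_nonpos (by linarith)]; ring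
    · rw [min_eq_right h2, max_eq_left h, abs_of_nonneg (by linarith)]; ring

/-- If the support of a norm-one `f ∈ L¹(μ)` contains an atom `A` (on which
`f = c` a.e. with `c > 0`), then `f` is not a Δ-point: for any
`0 < ε < 2cμ(A)`, `f` is not in the closed convex hull of `Δ_ε(f)`; moreover
any convex combination `h` of elements of `Δ_ε(f)` satisfies
`‖f - h‖ ≥ (c - ε/(2μ(A)))·μ(A)`. -/
theorem stmt_6 {Ω : Type*} [MeasurableSpace Ω] (μ : Measure Ω) [SigmaFinite μ]
    (f : Lp ℝ 1 μ) (hf : ‖f‖ = 1)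
    (A : Set Ω) (hA : IsMeasureAtom μ A) (c : ℝ) (hc : 0 < c)
    (hfA : ∀ᵐ x ∂(μ.restrict A), (f : Ω → ℝ) x = c)
    (ε : ℝ) (hε : 0 < ε) (hε2 : ε < 2 * c * (μ A).toReal) :
    f ∉ closure (convexHull ℝ {g : Lp ℝ 1 μ | ‖g‖ ≤ 1 ∧ 2 - ε ≤ ‖f - g‖}) ∧
    ∀ h ∈ convexHull ℝ {g : Lp ℝ 1 μ | ‖g‖ ≤ 1 ∧ 2 - ε ≤ ‖f - g‖},
      (c - ε / (2 * (μ A).toReal)) * (μ A).toReal ≤ ‖f - h‖ := by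
  obtain ⟨hAm, hA0, hAtop, hAatom⟩ := hA
  set a := (μ A).toReal with ha_def
  have ha : 0 < a := ENNReal.toReal_pos hA0.ne' hAtop.ne
  haveI : IsFiniteMeasure (μ.restrict A) :=
    ⟨by rwa [Measure.restrict_apply_univ]⟩
  set φ : Lp ℝ 1 μ → ℝ := fun g => ∫ x in A, (g : Ω → ℝ) x ∂μ with hφ_def
  have h_int : ∀ g : Lp ℝ 1 μ, Integrable (g : Ω → ℝ) μ := fun g =>
    L1.integrable_coeFn g
  -- norm as integral of abs
  have hnorm : ∀ g : Lp ℝ 1 μ, ‖g‖ = ∫ x, |(g : Ω → ℝ) x| ∂μ := by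
    intro g
    rw [L1.norm_eq_integral_norm]
    simp [Real.norm_eq_abs]
  -- linearity
  have hadd : ∀ g₁ g₂ : Lp ℝ 1 μ, φ (g₁ + g₂) = φ g₁ + φ g₂ := by
    intro g₁ g₂
    have h1 : φ (g₁ + g₂) = ∫ x in A, ((g₁ : Ω → ℝ) x + (g₂ : Ω → ℝ) x) ∂μ := by
      refine integral_congr_ae ?_
      filter_upwards [ae_restrict_of_ae (Lp.coeFn_add g₁ g₂)] with x hx
      simpa using hx
    rw [h1, integral_add ((h_int g₁).restrict) ((h_int g₂).restrict)]
  have hsmul : ∀ (r : ℝ) (g : Lp ℝ 1 μ), φ (r • g) = r * φ g := by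
    intro r g
    have h1 : φ (r • g) = ∫ x in A, r * (g : Ω → ℝ) x ∂μ := by
      refine integral_congr_ae ?_
      filter_upwards [ae_restrict_of_ae (Lp.coeFn_smul r g)] with x hx
      simpa using hx
    rw [h1, integral_const_mul]
  have hsub : ∀ g₁ g₂ : Lp ℝ 1 μ, φ (g₁ - g₂) = φ g₁ - φ g₂ := by
    intro g₁ g₂
    have h1 : φ (g₁ - g₂) = ∫ x in A, ((g₁ : Ω → ℝ) x - (g₂ : Ω → ℝ) x) ∂μ := by
      refine integral_congr_ae ?_
      filter_upwards [ae_restrict_of_ae (Lp.coeFn_sub g₁ g₂)] with x hx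
      simpa using hx
    rw [h1, integral_sub ((h_int g₁).restrict) ((h_int g₂).restrict)]
  -- boundedness
  have hφle : ∀ g : Lp ℝ 1 μ, |φ g| ≤ ‖g‖ := by
    intro g
    calc |φ g| ≤ ∫ x in A, |(g : Ω → ℝ) x| ∂μ := by
          simpa [Real.norm_eq_abs] using
            norm_integral_le_integral_norm (μ := μ.restrict A) (f := ((g : Ω → ℝ)))
      _ ≤ ∫ x, |(g : Ω → ℝ) x| ∂μ :=
          setIntegral_le_integral (h_int g).abs
            (Filter.Eventually.of_forall fun x => abs_nonneg _)
      _ = ‖g‖ := (hnorm g).symm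
  have hcont : Continuous φ := by
    refine (LipschitzWith.of_dist_le_mul (K := 1) fun g₁ g₂ => ?_).continuous
    rw [Real.dist_eq, dist_eq_norm, ← hsub g₁ g₂]
    simpa using hφle _
  -- value on f
  have hfa : φ f = c * a := by
    have h1 : φ f = ∫ x in A, c ∂μ := integral_congr_ae hfA
    rw [h1, setIntegral_const, measureReal_def, smul_eq_mul, mul_comm]
  have hfabs : ∫ x in A, |(f : Ω → ℝ) x| ∂μ = c * a := by
    have h1 : ∫ x in A, |(f : Ω → ℝ) x| ∂μ = ∫ x in A, c ∂μ := by
      refine integral_congr_ae ?_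
      filter_upwards [hfA] with x hx
      rw [hx, abs_of_pos hc]
    rw [h1, setIntegral_const, measureReal_def, smul_eq_mul, mul_comm]
  -- key: elements of Δ_ε have φ ≤ ε/2
  set S : Set (Lp ℝ 1 μ) := {g : Lp ℝ 1 μ | ‖g‖ ≤ 1 ∧ 2 - ε ≤ ‖f - g‖} with hS_def
  have hKey : S ⊆ {g : Lp ℝ 1 μ | φ g ≤ ε / 2} := by
    rintro g ⟨hg1, hg2⟩
    set m : Ω → ℝ := fun x => max (min c ((g : Ω → ℝ) x)) 0 with hm_def
    have hgm : StronglyMeasurable (g : Ω → ℝ) := Lp.stronglyMeasurable g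
    have hmm : AEStronglyMeasurable m (μ.restrict A) :=
      ((measurable_const.min hgm.measurable).max
        measurable_const).aestronglyMeasurable
    have hm_int : Integrable m (μ.restrict A) := by
      refine Integrable.mono' (integrable_const c) hmm ?_
      filter_upwards with x
      rw [Real.norm_eq_abs, abs_of_nonneg (le_max_right _ _)]
      exact max_le (min_le_left _ _) hc.le
    -- main inequality : ‖f - g‖ ≤ 2 - 2 ∫_A m
    have hfg_int : Integrable (fun x => (f : Ω → ℝ) x - (g : Ω → ℝ) x) μ :=
      (h_int f).sub (h_int g)
    have hnorm_fg : ‖f - g‖ = ∫ x, |(f : Ω → ℝ) x - (g : Ω → ℝ) x| ∂μ := by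
      rw [hnorm (f - g)]
      refine integral_congr_ae ?_
      filter_upwards [Lp.coeFn_sub f g] with x hx
      rw [hx]; simp
    have hsplit : (∫ x, |(f : Ω → ℝ) x - (g : Ω → ℝ) x| ∂μ)
        = (∫ x in A, |(f : Ω → ℝ) x - (g : Ω → ℝ) x| ∂μ)
          + ∫ x in Aᶜ, |(f : Ω → ℝ) x - (g : Ω → ℝ) x| ∂μ :=
      (integral_add_compl hAm hfg_int.abs).symm
    have hI1 : ∫ x in A, |(f : Ω → ℝ) x - (g : Ω → ℝ) x| ∂μ
        = c * a + (∫ x in A, |(g : Ω → ℝ) x| ∂μ) - 2 * ∫ x in A, m x ∂μ := by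
      have he : ∀ᵐ x ∂μ.restrict A,
          |(f : Ω → ℝ) x - (g : Ω → ℝ) x| = c + |(g : Ω → ℝ) x| - 2 * m x := by
        filter_upwards [hfA] with x hx
        rw [hx]; exact abs_sub_eq_aux c _ hc.le
      have hint1 : Integrable (fun x => c + |(g : Ω → ℝ) x|) (μ.restrict A) :=
        (integrable_const c).add ((h_int g).abs.restrict)
      have hint2 : Integrable (fun x => 2 * m x) (μ.restrict A) :=
        hm_int.const_mul 2
      rw [integral_congr_ae he, integral_sub hint1 hint2,
        integral_add (integrable_const c) ((h_int g).abs.restrict),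
        integral_const_mul, setIntegral_const, measureReal_def, smul_eq_mul, mul_comm]
    have hI2 : ∫ x in Aᶜ, |(f : Ω → ℝ) x - (g : Ω → ℝ) x| ∂μ
        ≤ (1 - c * a) + (‖g‖ - ∫ x in A, |(g : Ω → ℝ) x| ∂μ) := by
      have h1 : ∫ x in Aᶜ, |(f : Ω → ℝ) x - (g : Ω → ℝ) x| ∂μ
          ≤ ∫ x in Aᶜ, (|(f : Ω → ℝ) x| + |(g : Ω → ℝ) x|) ∂μ := by
        refine integral_mono (hfg_int.abs.restrict)
          (((h_int f).abs.add (h_int g).abs).restrict) fun x => ?_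
        calc |(f : Ω → ℝ) x - (g : Ω → ℝ) x|
            ≤ |(f : Ω → ℝ) x| + |-(g : Ω → ℝ) x| := by
              rw [sub_eq_add_neg]; exact abs_add_le _ _
          _ = |(f : Ω → ℝ) x| + |(g : Ω → ℝ) x| := by rw [abs_neg]
      have e1 := integral_add_compl hAm (h_int f).abs
      have e2 := integral_add_compl hAm (h_int g).abs
      have h2 : ∫ x in Aᶜ, (|(f : Ω → ℝ) x| + |(g : Ω → ℝ) x|) ∂μ
          = (∫ x in Aᶜ, |(f : Ω → ℝ) x| ∂μ) + ∫ x in Aᶜ, |(g : Ω → ℝ) x| ∂μ :=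
        integral_add ((h_int f).abs.restrict) ((h_int g).abs.restrict)
      have hf1 : (∫ x, |(f : Ω → ℝ) x| ∂μ) = 1 := by rw [← hnorm f, hf]
      have hg1' : (∫ x, |(g : Ω → ℝ) x| ∂μ) = ‖g‖ := (hnorm g).symm
      linarith
    have hmain : ‖f - g‖ ≤ 2 - 2 * ∫ x in A, m x ∂μ := by
      rw [hnorm_fg, hsplit]
      linarith
    -- atom dichotomy
    have hCmeas : MeasurableSet {x | c < (g : Ω → ℝ) x} :=
      measurableSet_lt measurable_const hgm.measurable
    rcases hAatom (A ∩ {x | c < (g : Ω → ℝ) x}) (hAm.inter hCmeas)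
        Set.inter_subset_left with hC | hC
    · -- g ≤ c a.e. on A
      have hae : ∀ᵐ x ∂μ.restrict A, (g : Ω → ℝ) x ≤ c := by
        rw [ae_iff]
        have : μ.restrict A {x | ¬ (g : Ω → ℝ) x ≤ c} = 0 := by
          rw [show {x | ¬ (g : Ω → ℝ) x ≤ c} = {x | c < (g : Ω → ℝ) x} by
            ext x; simp [not_le],
            Measure.restrict_apply hCmeas, Set.inter_comm]
          exact hC
        exact this
      have hgm' : φ g ≤ ∫ x in A, m x ∂μ := by
        refine integral_mono_ae ((h_int g).restrict) hm_int ?_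
        filter_upwards [hae] with x hx
        show (g : Ω → ℝ) x ≤ max (min c ((g : Ω → ℝ) x)) 0
        rw [min_eq_right hx]
        exact le_max_left _ _
      have : 2 * (∫ x in A, m x ∂μ) ≤ ε := by linarith
      show φ g ≤ ε / 2
      linarith
    · -- c < g a.e. on A : contradiction
      exfalso
      have hdiff : μ (A \ {x | c < (g : Ω → ℝ) x}) = 0 := by
        have h3 := measure_inter_add_diff A hCmeas (μ := μ)
        rw [hC] at h3
        have h4 : μ (A \ {x | c < (g : Ω → ℝ) x}) ≤ 0 := by
          by_contra h5
          have h6 : 0 < μ (A \ {x | c < (g : Ω → ℝ) x}) := by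
            simpa [pos_iff_ne_zero] using fun h => h5 (le_of_eq h)
          have := ENNReal.lt_add_right hAtop.ne h6.ne'
          rw [h3] at this
          exact lt_irrefl _ this
        exact le_antisymm h4 zero_le
      have hae : ∀ᵐ x ∂μ.restrict A, c < (g : Ω → ℝ) x := by
        rw [ae_iff]
        have hmeas2 : MeasurableSet {x | ¬ c < (g : Ω → ℝ) x} := hCmeas.compl
        have : μ.restrict A {x | ¬ c < (g : Ω → ℝ) x} = 0 := by
          rw [Measure.restrict_apply hmeas2,
            show {x | ¬ c < (g : Ω → ℝ) x} ∩ A = A \ {x | c < (g : Ω → ℝ) x} by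
              ext x; simp [Set.mem_diff, and_comm]]
          exact hdiff
        exact this
      have hme : ∫ x in A, m x ∂μ = c * a := by
        have he : ∀ᵐ x ∂μ.restrict A, m x = c := by
          filter_upwards [hae] with x hx
          show max (min c ((g : Ω → ℝ) x)) 0 = c
          rw [min_eq_left hx.le, max_eq_left hc.le]
        rw [integral_congr_ae he, setIntegral_const, measureReal_def, smul_eq_mul, mul_comm]
      rw [hme] at hmain
      linarith
  -- convexity and closedness of the halfspace
  have hlin : IsLinearMap ℝ φ := ⟨hadd, fun r g => by rw [hsmul r g]; rfl⟩
  have hTconv : Convex ℝ {g : Lp ℝ 1 μ | φ g ≤ ε / 2} :=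
    convex_halfSpace_le hlin (ε / 2)
  have hTclosed : IsClosed {g : Lp ℝ 1 μ | φ g ≤ ε / 2} :=
    isClosed_le hcont continuous_const
  have hTsub : convexHull ℝ S ⊆ {g : Lp ℝ 1 μ | φ g ≤ ε / 2} :=
    convexHull_min hKey hTconv
  constructor
  · intro hmem
    have : φ f ≤ ε / 2 := closure_minimal hTsub hTclosed hmem
    rw [hfa] at this
    linarith
  · intro h hh
    have hhT : φ h ≤ ε / 2 := hTsub hh
    have h1 : φ f - φ h ≤ ‖f - h‖ := by
      have h2 := hφle (f - h)
      rw [hsub f h] at h2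
      exact (le_abs_self _).trans h2
    have h3 : (c - ε / (2 * a)) * a = c * a - ε / 2 := by
      field_simp
    rw [h3]
    linarith [hfa]
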